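/- Let p be an odd prime and t a nonnegative integer with t ≡ 0 (mod p−1). For an integer s, define l_p(s, ω^t) := Σ_{a=1}^{p-1} (-1)^a ⟨a⟩^{-s} ω(a)^t Σ_{j=0}^{∞} binom(-s, j)(p/a)^j E_j, a p-adically convergent series with value in ℤ_p. Then for all integers s₁ and s₂, l_p(s₁, ω^t) ≡ l_p(s₂, ω^t) (mod p), i.e. l_p(s₁, ω^t) − l_p(s₂, ω^t) ∈ pℤ_p. -/

import Mathlib

/-- The Euler numbers `E₀ = 1`, `∑_{k=0}^{n} C(n,k) Eₖ + Eₙ = 0` for `n ≥ 1`. -/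
noncomputable def eulerNumber : ℕ → ℚ
  | 0 => 1
  | n + 1 => (-1/2) * ∑ k ∈ (Finset.range (n+1)).attach,
      ((n+1).choose k.1 : ℚ) * eulerNumber k.1
  decreasing_by exact Finset.mem_range.mp k.2

/-- The generalized binomial coefficient `binom(x, m) = x(x−1)⋯(x−m+1)/m!`. -/
noncomputable def qbinom (x : ℚ) (m : ℕ) : ℚ :=
  (descPochhammer ℚ m).eval x / m.factorial

/-- The `p`-adic `l`-function
`l_p(s, ω^t) = ∑_{a=1}^{p-1} (-1)^a ⟨a⟩^{-s} ω(a)^t ∑_{j=0}^{∞} binom(-s,j)(p/a)^j E_j`,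
where `⟨a⟩ = a/ω(a)`. -/
noncomputable def padicL (p : ℕ) [Fact p.Prime] (ω : ℕ → ℤ_[p]) (t : ℕ) (s : ℤ) : ℚ_[p] :=
  ∑ a ∈ Finset.Icc 1 (p - 1),
    (-1 : ℚ_[p]) ^ a * ((a : ℚ_[p]) / (ω a : ℚ_[p])) ^ (-s) * ((ω a : ℚ_[p])) ^ t *
      ∑' j : ℕ, (qbinom (-s : ℚ) j : ℚ_[p]) * ((p : ℚ_[p]) / (a : ℚ_[p])) ^ j *
        (eulerNumber j : ℚ_[p])

lemma qbinom_int_cast (k : ℤ) (j : ℕ) : qbinom (k : ℚ) j = ((Ring.choose k j : ℤ) : ℚ) := by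
  have h1 : ((descPochhammer ℚ j).eval (k:ℚ)) = (((descPochhammer ℤ j).eval k : ℤ) : ℚ) :=
    (descPochhammer_eval_cast (R := ℚ) j k).symm
  have h2 : (descPochhammer ℤ j).eval k = (j.factorial : ℤ) * Ring.choose k j := by
    rw [Polynomial.eval_eq_smeval, Ring.descPochhammer_eq_factorial_smul_choose, nsmul_eq_mul]
  have hf : ((j.factorial : ℚ)) ≠ 0 := by positivity
  rw [qbinom, h1, h2]
  push_cast
  rw [mul_comm, mul_div_assoc, div_self hf, mul_one]

lemma norm_nat_eq_one {p : ℕ} [Fact p.Prime] (a : ℕ) (h0 : 0 < a) (h : a < p) :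
    ‖(a : ℚ_[p])‖ = 1 := by
  have hle : ‖(a : ℚ_[p])‖ ≤ 1 := by
    simpa using Padic.norm_int_le_one (p := p) (a : ℤ)
  rcases lt_or_eq_of_le hle with h1 | h1
  · exfalso
    have hdvd : (p : ℤ) ∣ (a : ℤ) := by
      rw [← Padic.norm_intCast_lt_one_iff]
      simpa using h1
    have : p ∣ a := Int.ofNat_dvd.mp hdvd
    exact absurd (Nat.le_of_dvd h0 this) (not_le.mpr h)
  · exact h1

lemma euler_norm_le {p : ℕ} [Fact p.Prime] (hp : Odd p) (n : ℕ) :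
    ‖((eulerNumber n : ℚ) : ℚ_[p])‖ ≤ 1 := by
  have hp2 : 2 < p := by
    rcases (Fact.out (p := p.Prime)).two_le.lt_or_eq with h | h
    · exact h
    · exfalso; rw [← h] at hp; exact (by decide : ¬ Odd 2) hp
  have h2 : ‖(2 : ℚ_[p])‖ = 1 := by
    simpa using norm_nat_eq_one (p := p) 2 (by norm_num) hp2
  induction n using Nat.strong_induction_on with
  | _ n ih =>
  match n with
  | 0 => simp [eulerNumber]
  | (m+1) =>
    rw [eulerNumber]
    push_cast
    rw [norm_mul]
    have hhalf : ‖((-1 : ℚ_[p])/2)‖ = 1 := by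
      rw [norm_div, norm_neg, norm_one, h2, div_one]
    rw [hhalf, one_mul]
    refine IsUltrametricDist.norm_sum_le_of_forall_le_of_nonneg zero_le_one ?_
    rintro ⟨k, hk⟩ -
    rw [norm_mul]
    have hc : ‖(((m+1).choose k : ℕ) : ℚ_[p])‖ ≤ 1 := by
      simpa using Padic.norm_int_le_one (p := p) (((m+1).choose k : ℕ) : ℤ)
    have he := ih k (Finset.mem_range.mp hk)
    calc ‖(((m+1).choose k : ℕ) : ℚ_[p])‖ * ‖((eulerNumber k : ℚ) : ℚ_[p])‖
        ≤ 1 * 1 := mul_le_mul hc he (norm_nonneg _) zero_le_one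
      _ = 1 := one_mul 1

lemma zpow_sub_one_norm_le {p : ℕ} [Fact p.Prime] {x : ℚ_[p]} (hx : ‖x‖ = 1)
    (h : ‖x - 1‖ ≤ (p:ℝ)⁻¹) (n : ℤ) : ‖x ^ n - 1‖ ≤ (p:ℝ)⁻¹ := by
  have hp0 : (0:ℝ) ≤ (p:ℝ)⁻¹ := by positivity
  have hx0 : x ≠ 0 := by
    intro h0; rw [h0, norm_zero] at hx; exact one_ne_zero hx.symm
  have hnat : ∀ m : ℕ, ‖x ^ m - 1‖ ≤ (p:ℝ)⁻¹ := by
    intro m; induction m with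
    | zero => simpa using hp0
    | succ k ih =>
      have e : x ^ (k+1) - 1 = x ^ k * (x - 1) + (x ^ k - 1) := by ring
      rw [e]
      refine le_trans (IsUltrametricDist.norm_add_le_max _ _) (max_le ?_ ih)
      rw [norm_mul, norm_pow, hx, one_pow, one_mul]; exact h
  rcases n.eq_nat_or_neg with ⟨m, rfl | rfl⟩
  · simpa [zpow_natCast] using hnat m
  · have hxm : x ^ m ≠ 0 := pow_ne_zero m hx0
    have e : x ^ (-(m:ℤ)) - 1 = (1 - x ^ m) * (x ^ m)⁻¹ := by
      rw [zpow_neg, zpow_natCast, sub_mul, one_mul, mul_inv_cancel₀ hxm]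
    rw [e, norm_mul, norm_inv, norm_pow, hx, one_pow, inv_one, mul_one, norm_sub_rev]
    exact hnat m

/-- For an odd prime `p`, `t ≡ 0 (mod p-1)`, and `ω a` the Teichmüller lift of `a`,
the series defining `l_p(s, ω^t)` converges `p`-adically, its value lies in `ℤ_p`, and
`l_p(s₁, ω^t) ≡ l_p(s₂, ω^t) (mod p)` for all integers `s₁, s₂`. -/
theorem lp_congruence_mod_p (p : ℕ) [Fact p.Prime] (hp : Odd p)
    (t : ℕ) (ht : (p - 1) ∣ t) (ω : ℕ → ℤ_[p])
    (hω : ∀ a : ℕ, 0 < a → a < p → (ω a) ^ (p - 1) = 1 ∧ ‖ω a - (a : ℤ_[p])‖ < 1) :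
    (∀ s : ℤ, ∀ a ∈ Finset.Icc 1 (p - 1),
        Summable (fun j : ℕ => (qbinom (-s : ℚ) j : ℚ_[p]) *
          ((p : ℚ_[p]) / (a : ℚ_[p])) ^ j * (eulerNumber j : ℚ_[p]))) ∧
    (∀ s : ℤ, ‖padicL p ω t s‖ ≤ 1) ∧
    (∀ s₁ s₂ : ℤ, ‖padicL p ω t s₁ - padicL p ω t s₂‖ ≤ (p : ℝ)⁻¹) := by
  have hppos : 0 < p := (Fact.out (p := p.Prime)).pos
  have hp1 : 1 < p := (Fact.out (p := p.Prime)).one_lt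
  have hp0 : (0:ℝ) ≤ (p:ℝ)⁻¹ := by positivity
  have hplt : (p:ℝ)⁻¹ < 1 := by
    rw [inv_lt_one_iff₀]; right; exact_mod_cast hp1
  have hple : (p:ℝ)⁻¹ ≤ 1 := le_of_lt hplt
  -- norm of qbinom
  have hqb : ∀ (s : ℤ) (j : ℕ), ‖((qbinom (-s : ℚ) j : ℚ) : ℚ_[p])‖ ≤ 1 := by
    intro s j
    have e : (-s : ℚ) = ((-s : ℤ) : ℚ) := by push_cast; ring
    rw [e, qbinom_int_cast]
    simpa using Padic.norm_int_le_one (p := p) (Ring.choose (-s) j)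
  -- basic facts for each a
  have key : ∀ (s : ℤ) (a : ℕ), a ∈ Finset.Icc 1 (p - 1) →
      Summable (fun j : ℕ => (qbinom (-s : ℚ) j : ℚ_[p]) *
        ((p : ℚ_[p]) / (a : ℚ_[p])) ^ j * (eulerNumber j : ℚ_[p])) ∧
      ‖((a : ℚ_[p]) / (ω a : ℚ_[p])) ^ (-s) *
        (∑' j : ℕ, (qbinom (-s : ℚ) j : ℚ_[p]) *
          ((p : ℚ_[p]) / (a : ℚ_[p])) ^ j * (eulerNumber j : ℚ_[p])) - 1‖ ≤ (p:ℝ)⁻¹ ∧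
      ‖((ω a : ℚ_[p]))‖ = 1 := by
    intro s a ha
    rw [Finset.mem_Icc] at ha
    obtain ⟨ha1, ha2⟩ := ha
    have hap : a < p := lt_of_le_of_lt ha2 (Nat.sub_lt hppos one_pos)
    obtain ⟨hw1, hw2⟩ := hω a ha1 hap
    have hanorm : ‖(a : ℚ_[p])‖ = 1 := norm_nat_eq_one a ha1 hap
    -- norm of ω a is 1
    have hwnorm : ‖(ω a)‖ = 1 := by
      have hle : ‖(ω a)‖ ≤ 1 := PadicInt.norm_le_one _
      rcases lt_or_eq_of_le hle with hlt | heq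
      · exfalso
        have hne : p - 1 ≠ 0 := by omega
        have : ‖(ω a) ^ (p-1)‖ < 1 := by
          rw [norm_pow]
          exact pow_lt_one₀ (norm_nonneg _) hlt hne
        rw [hw1] at this
        simp at this
      · exact heq
    have hwnormQ : ‖((ω a : ℚ_[p]))‖ = 1 := by
      rw [PadicInt.padic_norm_e_of_padicInt]; exact hwnorm
    have hwne : ((ω a : ℚ_[p])) ≠ 0 := by
      intro h0; rw [h0, norm_zero] at hwnormQ; exact one_ne_zero hwnormQ.symm
    -- ω a ≡ a mod p
    have hwsub : ‖((ω a : ℚ_[p])) - (a : ℚ_[p])‖ ≤ (p:ℝ)⁻¹ := by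
      obtain ⟨y, hy⟩ := (PadicInt.norm_lt_one_iff_dvd _).mp hw2
      have : ‖ω a - (a : ℤ_[p])‖ ≤ (p:ℝ)⁻¹ := by
        rw [hy, norm_mul, PadicInt.norm_p]
        calc (p:ℝ)⁻¹ * ‖y‖ ≤ (p:ℝ)⁻¹ * 1 :=
              mul_le_mul_of_nonneg_left (PadicInt.norm_le_one y) hp0
          _ = (p:ℝ)⁻¹ := mul_one _
      calc ‖((ω a : ℚ_[p])) - (a : ℚ_[p])‖ = ‖((ω a - (a:ℕ) : ℤ_[p]) : ℚ_[p])‖ := by push_cast; ring_nf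
        _ = ‖ω a - (a : ℤ_[p])‖ := PadicInt.padic_norm_e_of_padicInt _
        _ ≤ (p:ℝ)⁻¹ := this
    set u : ℚ_[p] := (a : ℚ_[p]) / ((ω a : ℚ_[p])) with hu
    have hunorm : ‖u‖ = 1 := by rw [hu, norm_div, hanorm, hwnormQ, div_one]
    have husub : ‖u - 1‖ ≤ (p:ℝ)⁻¹ := by
      have e : u - 1 = ((a : ℚ_[p]) - ((ω a : ℚ_[p]))) / ((ω a : ℚ_[p])) := by
        rw [hu, div_sub_one hwne]
      rw [e, norm_div, hwnormQ, div_one, norm_sub_rev]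
      exact hwsub
    have huz : ‖u ^ (-s) - 1‖ ≤ (p:ℝ)⁻¹ := zpow_sub_one_norm_le hunorm husub (-s)
    have huznorm : ‖u ^ (-s)‖ = 1 := by rw [norm_zpow, hunorm, one_zpow]
    -- term bounds
    set f : ℕ → ℚ_[p] := fun j => (qbinom (-s : ℚ) j : ℚ_[p]) *
        ((p : ℚ_[p]) / (a : ℚ_[p])) ^ j * (eulerNumber j : ℚ_[p]) with hf
    have hterm : ∀ j, ‖f j‖ ≤ (p:ℝ)⁻¹ ^ j := by
      intro j
      rw [hf]
      simp only
      rw [norm_mul, norm_mul, norm_pow, norm_div, Padic.norm_p, hanorm, div_one]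
      calc ‖((qbinom (-s : ℚ) j : ℚ) : ℚ_[p])‖ * (p:ℝ)⁻¹ ^ j * ‖((eulerNumber j : ℚ) : ℚ_[p])‖
          ≤ 1 * (p:ℝ)⁻¹ ^ j * 1 := by
            refine mul_le_mul (mul_le_mul (hqb s j) le_rfl (by positivity) zero_le_one)
              (euler_norm_le hp j) (norm_nonneg _) (by positivity)
        _ = (p:ℝ)⁻¹ ^ j := by ring
    have hsum : Summable f :=
      Summable.of_norm_bounded (summable_geometric_of_lt_one hp0 hplt) hterm
    refine ⟨hsum, ?_, hwnormQ⟩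
    -- the inner sum is ≡ 1 mod p
    have hf0 : f 0 = 1 := by
      rw [hf]; simp [qbinom, eulerNumber]
    have hT : ∑' j, f j = 1 + ∑' j, f (j + 1) := by
      rw [hsum.tsum_eq_zero_add, hf0]
    have hTsub : ‖(∑' j, f j) - 1‖ ≤ (p:ℝ)⁻¹ := by
      rw [hT, add_sub_cancel_left]
      refine IsUltrametricDist.norm_tsum_le_of_forall_le_of_nonneg hp0 (fun j => ?_)
      refine (hterm (j+1)).trans ?_
      calc (p:ℝ)⁻¹ ^ (j+1) ≤ (p:ℝ)⁻¹ ^ 1 :=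
            pow_le_pow_of_le_one hp0 hple (by omega)
        _ = (p:ℝ)⁻¹ := pow_one _
    have e : u ^ (-s) * (∑' j, f j) - 1
        = u ^ (-s) * ((∑' j, f j) - 1) + (u ^ (-s) - 1) := by ring
    rw [e]
    refine le_trans (IsUltrametricDist.norm_add_le_max _ _) (max_le ?_ huz)
    rw [norm_mul, huznorm, one_mul]
    exact hTsub
  refine ⟨fun s a ha => (key s a ha).1, ?_, ?_⟩
  · -- norm at most one
    intro s
    rw [padicL]
    refine IsUltrametricDist.norm_sum_le_of_forall_le_of_nonneg zero_le_one (fun a ha => ?_)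
    obtain ⟨-, hX, hwnormQ⟩ := key s a ha
    have hXle : ‖((a : ℚ_[p]) / (ω a : ℚ_[p])) ^ (-s) *
        (∑' j : ℕ, (qbinom (-s : ℚ) j : ℚ_[p]) *
          ((p : ℚ_[p]) / (a : ℚ_[p])) ^ j * (eulerNumber j : ℚ_[p]))‖ ≤ 1 := by
      have e : ((a : ℚ_[p]) / (ω a : ℚ_[p])) ^ (-s) *
          (∑' j : ℕ, (qbinom (-s : ℚ) j : ℚ_[p]) *
            ((p : ℚ_[p]) / (a : ℚ_[p])) ^ j * (eulerNumber j : ℚ_[p]))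
          = (((a : ℚ_[p]) / (ω a : ℚ_[p])) ^ (-s) *
          (∑' j : ℕ, (qbinom (-s : ℚ) j : ℚ_[p]) *
            ((p : ℚ_[p]) / (a : ℚ_[p])) ^ j * (eulerNumber j : ℚ_[p])) - 1) + 1 := by ring
      rw [e]
      refine le_trans (IsUltrametricDist.norm_add_le_max _ _) (max_le (hX.trans hple) (by simp))
    have e2 : (-1 : ℚ_[p]) ^ a * ((a : ℚ_[p]) / (ω a : ℚ_[p])) ^ (-s) * ((ω a : ℚ_[p])) ^ t *
        (∑' j : ℕ, (qbinom (-s : ℚ) j : ℚ_[p]) *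
          ((p : ℚ_[p]) / (a : ℚ_[p])) ^ j * (eulerNumber j : ℚ_[p]))
        = ((-1 : ℚ_[p]) ^ a * ((ω a : ℚ_[p])) ^ t) *
          (((a : ℚ_[p]) / (ω a : ℚ_[p])) ^ (-s) *
          (∑' j : ℕ, (qbinom (-s : ℚ) j : ℚ_[p]) *
            ((p : ℚ_[p]) / (a : ℚ_[p])) ^ j * (eulerNumber j : ℚ_[p]))) := by ring
    rw [e2, norm_mul, norm_mul, norm_pow, norm_pow, norm_neg, norm_one, one_pow, hwnormQ,
      one_pow, one_mul, one_mul]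
    exact hXle
  · -- the congruence
    intro s₁ s₂
    rw [padicL, padicL, ← Finset.sum_sub_distrib]
    refine IsUltrametricDist.norm_sum_le_of_forall_le_of_nonneg hp0 (fun a ha => ?_)
    obtain ⟨-, hX1, hwnormQ⟩ := key s₁ a ha
    obtain ⟨-, hX2, -⟩ := key s₂ a ha
    set X₁ : ℚ_[p] := ((a : ℚ_[p]) / (ω a : ℚ_[p])) ^ (-s₁) *
        (∑' j : ℕ, (qbinom (-s₁ : ℚ) j : ℚ_[p]) *
          ((p : ℚ_[p]) / (a : ℚ_[p])) ^ j * (eulerNumber j : ℚ_[p])) with hX1def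
    set X₂ : ℚ_[p] := ((a : ℚ_[p]) / (ω a : ℚ_[p])) ^ (-s₂) *
        (∑' j : ℕ, (qbinom (-s₂ : ℚ) j : ℚ_[p]) *
          ((p : ℚ_[p]) / (a : ℚ_[p])) ^ j * (eulerNumber j : ℚ_[p])) with hX2def
    have e : (-1 : ℚ_[p]) ^ a * ((a : ℚ_[p]) / (ω a : ℚ_[p])) ^ (-s₁) * ((ω a : ℚ_[p])) ^ t *
        (∑' j : ℕ, (qbinom (-s₁ : ℚ) j : ℚ_[p]) *
          ((p : ℚ_[p]) / (a : ℚ_[p])) ^ j * (eulerNumber j : ℚ_[p])) -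
        (-1 : ℚ_[p]) ^ a * ((a : ℚ_[p]) / (ω a : ℚ_[p])) ^ (-s₂) * ((ω a : ℚ_[p])) ^ t *
        (∑' j : ℕ, (qbinom (-s₂ : ℚ) j : ℚ_[p]) *
          ((p : ℚ_[p]) / (a : ℚ_[p])) ^ j * (eulerNumber j : ℚ_[p]))
        = ((-1 : ℚ_[p]) ^ a * ((ω a : ℚ_[p])) ^ t) * ((X₁ - 1) - (X₂ - 1)) := by
      rw [hX1def, hX2def]; ring
    rw [e, norm_mul, norm_mul, norm_pow, norm_pow, norm_neg, norm_one, one_pow, hwnormQ,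
      one_pow, one_mul, one_mul]
    rw [sub_eq_add_neg]
    refine le_trans (IsUltrametricDist.norm_add_le_max _ _) (max_le hX1 ?_)
    rw [norm_neg]
    exact hX2
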